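/- arXiv:1402.5295 — 2 statements merged into one kernel-verified Lean document; each statement's English description precedes it below -/
import Mathlib

section
/- The trivial zeros are the only real zeros of the Riemann zeta function: if x is a real number with x ≠ 1 and ζ(x) = 0, then x = -2m for some positive integer m. -/
open Complex Set Filter

noncomputable def etaTerm (s : ℂ) (k : ℕ) : ℂ :=
  ((2 * k + 1 : ℕ) : ℂ) ^ (-s) - ((2 * k + 2 : ℕ) : ℂ) ^ (-s)

noncomputable def etaF (s : ℂ) : ℂ := ∑' k, etaTerm s k

lemma etaTerm_bound {σ R : ℝ} (hσ : 0 < σ) {s : ℂ} (hs : σ ≤ s.re) (hR : ‖s‖ ≤ R) (k : ℕ) :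
    ‖etaTerm s k‖ ≤ R * (2 * (k : ℝ) + 1) ^ (-σ - 1) := by
  have hs0 : s ≠ 0 := by
    intro h
    rw [h] at hs
    simp only [Complex.zero_re] at hs
    linarith
  set a : ℝ := 2 * (k : ℝ) + 1 with ha_def
  have hk0 : (0:ℝ) ≤ (k:ℝ) := Nat.cast_nonneg k
  have ha1 : (1 : ℝ) ≤ a := by linarith
  have ha0 : (0 : ℝ) < a := by linarith
  -- derivative of t ↦ (t:ℂ)^(-s)
  have key : ∀ t ∈ Icc a (a + 1),
      HasDerivWithinAt (fun y : ℝ => (y : ℂ) ^ (-s)) (-s * (t : ℂ) ^ (-s - 1)) (Icc a (a+1)) t := by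
    intro t ht
    have ht0 : t ≠ 0 := by
      have := ht.1; intro h; rw [h] at this; linarith
    have hr : (-s - 1 : ℂ) ≠ -1 := by
      intro h
      apply hs0
      have : -s = 0 := by linear_combination h
      simpa [neg_eq_zero] using this
    have h1 := hasDerivAt_ofReal_cpow_const' ht0 hr
    have h2 : HasDerivAt (fun y : ℝ => (-s) * ((y : ℂ) ^ (-s) / (-s))) ((-s) * (t:ℝ) ^ (-s - 1)) t := by
      have := h1.const_mul (-s)
      convert this using 2 with y
      · rfl
      · ring_nf
    have h3 : (fun y : ℝ => (-s) * ((y : ℂ) ^ (-s) / (-s))) = fun y : ℝ => (y : ℂ) ^ (-s) := by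
      funext y
      rw [mul_div_cancel₀]
      simpa [neg_eq_zero] using hs0
    rw [h3] at h2
    exact h2.hasDerivWithinAt
  have bound : ∀ t ∈ Icc a (a + 1), ‖-s * (t : ℂ) ^ (-s - 1)‖ ≤ R * a ^ (-σ - 1) := by
    intro t ht
    have ht1 : (1:ℝ) ≤ t := le_trans ha1 ht.1
    have ht0 : (0:ℝ) < t := by linarith
    rw [norm_mul, norm_neg]
    have hcp : ‖(t : ℂ) ^ (-s - 1)‖ = t ^ ((-s - 1).re) := by
      rw [Complex.norm_cpow_eq_rpow_re_of_pos ht0]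
    rw [hcp]
    have h1 : t ^ ((-s - 1).re) ≤ t ^ (-σ - 1) := by
      apply Real.rpow_le_rpow_of_exponent_le ht1
      simp only [Complex.sub_re, Complex.neg_re, Complex.one_re]
      linarith
    have h2 : t ^ (-σ - 1) ≤ a ^ (-σ - 1) :=
      Real.rpow_le_rpow_of_nonpos ha0 ht.1 (by linarith)
    have hRa : (0:ℝ) ≤ R := le_trans (norm_nonneg s) hR
    exact mul_le_mul hR (le_trans h1 h2) (Real.rpow_nonneg ht0.le _) hRa
  have mvt := Convex.norm_image_sub_le_of_norm_hasDerivWithin_le key bound (convex_Icc a (a+1))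
    (left_mem_Icc.mpr (by linarith)) (right_mem_Icc.mpr (by linarith))
  have heq : etaTerm s k = ((a : ℝ) : ℂ) ^ (-s) - (((a + 1 : ℝ)) : ℂ) ^ (-s) := by
    rw [etaTerm, ha_def]
    push_cast
    ring_nf
  rw [heq, ← norm_neg]
  have h4 : ‖((a + 1 : ℝ) : ℂ) ^ (-s) - ((a : ℝ) : ℂ) ^ (-s)‖ ≤ R * a ^ (-σ - 1) * ‖(a + 1) - a‖ := mvt
  simpa using h4

lemma etaSummable {σ : ℝ} (hσ : 0 < σ) :
    Summable (fun k : ℕ => (2 * (k : ℝ) + 1) ^ (-σ - 1)) := by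
  have h1 : Summable (fun k : ℕ => ((k : ℝ) + 1) ^ (-σ - 1)) := by
    have := (summable_nat_add_iff (f := fun n : ℕ => (n : ℝ) ^ (-σ - 1)) 1).mpr
      (Real.summable_nat_rpow.mpr (by linarith))
    simpa [Nat.cast_add] using this
  apply h1.of_nonneg_of_le (fun k => Real.rpow_nonneg (by positivity) _)
  intro k
  have hk : (0:ℝ) ≤ (k:ℝ) := Nat.cast_nonneg k
  exact Real.rpow_le_rpow_of_nonpos (by linarith) (by linarith) (by linarith)

lemma etaF_differentiableAt {z : ℂ} (hz : 0 < z.re) : DifferentiableAt ℂ etaF z := by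
  set σ : ℝ := z.re / 2 with hσ_def
  have hσ : 0 < σ := by positivity
  set R : ℝ := ‖z‖ + 1 with hR_def
  set V : Set ℂ := {s | σ < s.re} ∩ {s | ‖s‖ < R} with hV_def
  have hVopen : IsOpen V :=
    (isOpen_lt continuous_const Complex.continuous_re).inter
      (isOpen_lt continuous_norm continuous_const)
  have hzV : z ∈ V := ⟨by simp only [mem_setOf_eq]; linarith, by simp [hR_def]⟩
  have hdiff : DifferentiableOn ℂ (fun w => ∑' k, etaTerm w k) V := by
    apply differentiableOn_tsum_of_summable_norm
      (u := fun k : ℕ => R * (2 * (k : ℝ) + 1) ^ (-σ - 1))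
    · exact (etaSummable hσ).mul_left R
    · intro k
      apply DifferentiableOn.sub <;>
      · apply Differentiable.differentiableOn
        apply Differentiable.const_cpow (differentiable_neg)
        exact Or.inl (Nat.cast_ne_zero.mpr (by omega))
    · exact hVopen
    · intro k w hw
      exact etaTerm_bound hσ hw.1.le hw.2.le k
  exact (hdiff.differentiableAt (hVopen.mem_nhds hzV))

lemma etaF_eq {s : ℂ} (hs : 1 < s.re) :
    etaF s = (1 - 2 * (2 : ℂ) ^ (-s)) * riemannZeta s := by
  have hs0 : -s ≠ 0 := by
    intro h
    rw [neg_eq_zero] at h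
    rw [h] at hs
    norm_num at hs
  set f : ℕ → ℂ := fun n => (n : ℂ) ^ (-s) with hf_def
  have hsum : Summable f := by
    have := Complex.summable_one_div_nat_cpow.mpr hs
    simpa only [hf_def, cpow_neg, one_div] using this
  have hzeta : riemannZeta s = ∑' n, f n := by
    rw [zeta_eq_tsum_one_div_nat_cpow hs]
    simp only [hf_def, cpow_neg, one_div]
  have hodd : Summable (fun k => f (2 * k + 1)) :=
    hsum.comp_injective (fun a b h => by omega)
  have heven : Summable (fun k => f (2 * k)) :=
    hsum.comp_injective (fun a b h => by omega)
  have heven2 : Summable (fun k => f (2 * k + 2)) :=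
    hsum.comp_injective (fun a b h => by omega)
  have h1 : etaF s = (∑' k, f (2 * k + 1)) - ∑' k, f (2 * k + 2) := by
    rw [etaF, ← Summable.tsum_sub hodd heven2]
    congr 1 with k
  have hf0 : f 0 = 0 := by
    simpa [hf_def] using zero_cpow hs0
  have h2 : ∑' k, f (2 * k + 2) = ∑' k, f (2 * k) := by
    have := Summable.tsum_eq_zero_add heven
    have h3 : (fun k : ℕ => f (2 * (k + 1))) = fun k : ℕ => f (2 * k + 2) := by
      funext k
      have hkk : 2 * (k + 1) = 2 * k + 2 := by omega
      rw [hkk]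
    rw [h3] at this
    rw [this, hf0, zero_add]
  have h4 : (∑' k, f (2 * k)) + ∑' k, f (2 * k + 1) = ∑' n, f n :=
    tsum_even_add_odd heven hodd
  have h5 : ∑' k, f (2 * k) = (2 : ℂ) ^ (-s) * ∑' n, f n := by
    rw [← tsum_mul_left]
    congr 1 with k
    have : ((2 * k : ℕ) : ℂ) = (((2 : ℝ)) : ℂ) * (((k : ℝ)) : ℂ) := by push_cast; ring
    rw [hf_def]
    simp only
    rw [this, mul_cpow_ofReal_nonneg (by norm_num) (Nat.cast_nonneg k)]
    norm_num
  rw [h1, h2, hzeta]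
  have h6 : (∑' k, f (2*k+1)) = (∑' n, f n) - ∑' k, f (2 * k) := by
    rw [← h4]; ring
  rw [h6, h5]
  ring

lemma etaF_ne_zero {x : ℝ} (hx0 : 0 < x) (hx1 : x < 1) : etaF (x : ℂ) ≠ 0 := by
  set r : ℕ → ℝ := fun k => (2 * (k : ℝ) + 1) ^ (-x) - (2 * (k : ℝ) + 2) ^ (-x) with hr_def
  have hterm : ∀ k, etaTerm (x : ℂ) k = ((r k : ℝ) : ℂ) := by
    intro k
    have hk : (0:ℝ) ≤ (k:ℝ) := Nat.cast_nonneg k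
    rw [hr_def]
    simp only
    rw [ofReal_sub, Complex.ofReal_cpow (by linarith) (-x), Complex.ofReal_cpow (by linarith) (-x)]
    rw [etaTerm]
    push_cast
    ring_nf
  have hnonneg : ∀ k, 0 ≤ r k := by
    intro k
    have hk : (0:ℝ) ≤ (k:ℝ) := Nat.cast_nonneg k
    exact sub_nonneg.mpr (Real.rpow_le_rpow_of_nonpos (by linarith) (by linarith) (by linarith))
  have hsummable : Summable r := by
    apply ((etaSummable hx0).mul_left 1).of_nonneg_of_le hnonneg
    intro k
    have h1 : r k ≤ |r k| := le_abs_self _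
    have h2 : |r k| = ‖etaTerm (x : ℂ) k‖ := by
      rw [hterm k]
      simp [Complex.norm_real]
    have h3 : ‖etaTerm (x : ℂ) k‖ ≤ 1 * (2 * (k : ℝ) + 1) ^ (-x - 1) := by
      apply etaTerm_bound hx0 (by simp) _ k
      rw [Complex.norm_real, Real.norm_eq_abs, abs_of_pos hx0]
      linarith
    calc r k ≤ ‖etaTerm (x : ℂ) k‖ := h2 ▸ h1
      _ ≤ 1 * (2 * (k : ℝ) + 1) ^ (-x - 1) := h3
  have h0 : 0 < r 0 := by
    rw [hr_def]
    simp only [Nat.cast_zero, mul_zero, zero_add]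
    rw [Real.one_rpow]
    have : (2:ℝ) ^ (-x) < 1 :=
      Real.rpow_lt_one_of_one_lt_of_neg (by norm_num) (by linarith)
    linarith
  have hpos : 0 < ∑' k, r k := Summable.tsum_pos hsummable hnonneg 0 h0
  rw [etaF]
  have : ∑' k, etaTerm (x : ℂ) k = ((∑' k, r k : ℝ) : ℂ) := by
    rw [Complex.ofReal_tsum]
    exact tsum_congr hterm
  rw [this]
  simpa using hpos.ne'

lemma zeta_ne_zero_of_Ioo {x : ℝ} (hx0 : 0 < x) (hx1 : x < 1) : riemannZeta (x : ℂ) ≠ 0 := by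
  set A : Set ℂ := {s | 0 < s.re ∧ s.re < 1} with hA_def
  set B : Set ℂ := {s | 0 < s.re ∧ s.im < 0} with hB_def
  set C : Set ℂ := {s | 0 < s.re ∧ 0 < s.im} with hC_def
  set D : Set ℂ := {s | 1 < s.re} with hD_def
  set U : Set ℂ := A ∪ B ∪ C ∪ D with hU_def
  have hre_pos : ∀ s ∈ U, 0 < s.re := by
    rintro s (((⟨h, _⟩ | ⟨h, _⟩) | ⟨h, _⟩) | h)
    · exact h
    · exact h
    · exact h
    · simp only [hD_def, mem_setOf_eq] at h; linarith
  have hne_one : ∀ s ∈ U, s ≠ 1 := by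
    rintro s (((⟨_, h⟩ | ⟨_, h⟩) | ⟨_, h⟩) | h) rfl <;>
      simp only [hD_def, mem_setOf_eq, Complex.one_re, Complex.one_im] at h <;> linarith
  have hAopen : IsOpen A :=
    (isOpen_lt continuous_const Complex.continuous_re).inter
      (isOpen_lt Complex.continuous_re continuous_const)
  have hBopen : IsOpen B :=
    (isOpen_lt continuous_const Complex.continuous_re).inter
      (isOpen_lt Complex.continuous_im continuous_const)
  have hCopen : IsOpen C :=
    (isOpen_lt continuous_const Complex.continuous_re).inter
      (isOpen_lt continuous_const Complex.continuous_im)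
  have hDopen : IsOpen D := isOpen_lt continuous_const Complex.continuous_re
  have hUopen : IsOpen U := ((hAopen.union hBopen).union hCopen).union hDopen
  -- preconnectedness
  have hAconv : Convex ℝ A := by
    rw [hA_def, show {s : ℂ | 0 < s.re ∧ s.re < 1} =
      {s : ℂ | 0 < s.re} ∩ {s : ℂ | s.re < 1} from rfl]
    exact (convex_halfSpace_re_gt 0).inter (convex_halfSpace_re_lt 1)
  have hBconv : Convex ℝ B :=
    (convex_halfSpace_re_gt 0).inter (convex_halfSpace_im_lt 0)
  have hCconv : Convex ℝ C :=
    (convex_halfSpace_re_gt 0).inter (convex_halfSpace_im_gt 0)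
  have hDconv : Convex ℝ D := convex_halfSpace_re_gt 1
  have hABpre : IsPreconnected (A ∪ B) := by
    apply IsPreconnected.union (⟨1/2, -1/2⟩ : ℂ)
    · constructor <;> norm_num
    · constructor <;> norm_num
    · exact hAconv.isPreconnected
    · exact hBconv.isPreconnected
  have hABCpre : IsPreconnected (A ∪ B ∪ C) := by
    apply IsPreconnected.union (⟨1/2, 1/2⟩ : ℂ)
    · left; constructor <;> norm_num
    · constructor <;> norm_num
    · exact hABpre
    · exact hCconv.isPreconnected
  have hUpre : IsPreconnected U := by
    apply IsPreconnected.union (⟨2, 1⟩ : ℂ)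
    · right; constructor <;> norm_num
    · norm_num [hD_def]
    · exact hABCpre
    · exact hDconv.isPreconnected
  -- analytic functions
  set G : ℂ → ℂ := fun s => (1 - 2 * (2 : ℂ) ^ (-s)) * riemannZeta s with hG_def
  have hFan : AnalyticOnNhd ℂ etaF U := by
    apply DifferentiableOn.analyticOnNhd _ hUopen
    exact fun s hs => (etaF_differentiableAt (hre_pos s hs)).differentiableWithinAt
  have hGan : AnalyticOnNhd ℂ G U := by
    apply DifferentiableOn.analyticOnNhd _ hUopen
    intro s hs
    apply DifferentiableAt.differentiableWithinAt
    apply DifferentiableAt.mul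
    · apply DifferentiableAt.sub (differentiableAt_const _)
      apply DifferentiableAt.const_mul
      exact (differentiable_neg.const_cpow (Or.inl (by norm_num))).differentiableAt
    · exact differentiableAt_riemannZeta (hne_one s hs)
  have hz₀ : (⟨2, 1⟩ : ℂ) ∈ U := by right; norm_num [hD_def]
  have hfg : etaF =ᶠ[nhds (⟨2, 1⟩ : ℂ)] G := by
    have hmem : {s : ℂ | 1 < s.re} ∈ nhds (⟨2, 1⟩ : ℂ) :=
      (isOpen_lt continuous_const Complex.continuous_re).mem_nhds (by norm_num)
    filter_upwards [hmem] with s hs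
    exact etaF_eq hs
  have hEq : EqOn etaF G U :=
    AnalyticOnNhd.eqOn_of_preconnected_of_eventuallyEq hFan hGan hUpre hz₀ hfg
  have hxU : (x : ℂ) ∈ U := by
    left; left; left
    constructor <;> simpa
  have := hEq hxU
  rw [etaF] at this
  have hne := etaF_ne_zero hx0 hx1
  rw [etaF] at hne
  rw [this] at hne
  exact fun h => hne (by rw [hG_def]; simp [h])

/-- The trivial zeros are the only real zeros of the Riemann zeta function:
a real zero `x ≠ 1` of `ζ` is of the form `-2m` for some positive integer `m`. -/
theorem real_zeta_zero_is_trivial (x : ℝ) (hx : x ≠ 1)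
    (hzero : riemannZeta (x : ℂ) = 0) :
    ∃ m : ℕ, 0 < m ∧ x = -(2 * m) := by
  rcases lt_trichotomy x 0 with hneg | rfl | hpos
  · -- x < 0 : functional equation
    have h1 : ∀ n : ℕ, (1 : ℂ) - (x : ℂ) ≠ -n := by
      intro n h
      have := congrArg Complex.re h
      simp only [Complex.sub_re, Complex.one_re, Complex.ofReal_re, Complex.neg_re,
        Complex.natCast_re] at this
      have hn : (0:ℝ) ≤ (n:ℝ) := Nat.cast_nonneg n
      linarith
    have h2 : (1 : ℂ) - (x : ℂ) ≠ 1 := by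
      intro h
      have : (x : ℂ) = 0 := by linear_combination -h
      rw [Complex.ofReal_eq_zero] at this
      linarith
    have hfe := riemannZeta_one_sub h1 h2
    have h3 : (1 : ℂ) - ((1 : ℂ) - (x : ℂ)) = (x : ℂ) := by ring
    rw [h3, hzero] at hfe
    have hre : (1 - (x : ℂ)).re = 1 - x := by simp
    have hz1 : riemannZeta (1 - (x : ℂ)) ≠ 0 :=
      riemannZeta_ne_zero_of_one_le_re (by rw [hre]; linarith)
    have hg : Complex.Gamma (1 - (x : ℂ)) ≠ 0 :=
      Complex.Gamma_ne_zero_of_re_pos (by rw [hre]; linarith)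
    have hπ : ((Real.pi : ℂ)) ≠ 0 := by
      simpa using Real.pi_ne_zero
    have hp : (2 * (Real.pi : ℂ)) ^ (-(1 - (x : ℂ))) ≠ 0 := by
      intro h
      rw [Complex.cpow_eq_zero_iff] at h
      exact (mul_ne_zero two_ne_zero hπ) h.1
    have hcos : Complex.cos ((Real.pi : ℂ) * (1 - (x : ℂ)) / 2) = 0 := by
      by_contra hc
      exact (mul_ne_zero (mul_ne_zero (mul_ne_zero (mul_ne_zero two_ne_zero hp) hg) hc) hz1)
        hfe.symm
    rcases Complex.cos_eq_zero_iff.mp hcos with ⟨k, hk⟩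
    have hk2 : (Real.pi : ℂ) * (1 - (x : ℂ)) = (Real.pi : ℂ) * (2 * (k : ℂ) + 1) := by
      linear_combination 2 * hk
    have hk3 : (1 : ℂ) - (x : ℂ) = 2 * (k : ℂ) + 1 := mul_left_cancel₀ hπ hk2
    have hxr : x = -(2 * (k : ℝ)) := by
      have hxc : (x : ℂ) = -(2 * (k : ℂ)) := by linear_combination -hk3
      exact_mod_cast hxc
    have hk0 : (0 : ℤ) < k := by
      have : (0:ℝ) < (k:ℝ) := by linarith
      exact_mod_cast this
    refine ⟨k.toNat, by omega, ?_⟩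
    rw [hxr]
    have hcast : ((k.toNat : ℕ) : ℝ) = (k : ℝ) := by
      exact_mod_cast Int.toNat_of_nonneg hk0.le
    rw [hcast]
  · -- x = 0
    rw [Complex.ofReal_zero, riemannZeta_zero] at hzero
    norm_num at hzero
  · -- x > 0
    rcases lt_trichotomy x 1 with h1 | h1 | h1
    · exact absurd hzero (zeta_ne_zero_of_Ioo hpos h1)
    · exact absurd h1 hx
    · exact absurd hzero (riemannZeta_ne_zero_of_one_le_re (by simp; linarith))
end

section
/- Convergence of Taylor coefficients of partial products to those of the infinite product: let z : ℕ → ℂ be a sequence of nonzero complex numbers with ∑_{k} 1/|z_k| < ∞, and for each N and n let a_{N,n} be the coefficient of z^n in the polynomial ∏_{k=1}^N (1 - z/z_k), i.e. a_{N,n} = (-1)^n ∑_{S ⊆ {1,…,N}, |S| = n} ∏_{k ∈ S} 1/z_k. Then for each fixed n, the family (∏_{k ∈ S} 1/z_k) indexed by the finite subsets S of ℕ of cardinality n is summable, and a_{N,n} converges as N → ∞ to a_n = (-1)^n times its sum. -/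
open Filter

lemma prod_orderIsoOfFin_aux {M : Type*} [CommMonoid M] (g : ℕ → M) {S : Finset ℕ} {n : ℕ}
    (h : S.card = n) :
    ∏ i : Fin n, g ((S.orderIsoOfFin h i : ℕ)) = ∏ k ∈ S, g k := by
  rw [← Finset.prod_coe_sort S g]
  exact (S.orderIsoOfFin h).toEquiv.prod_comp (fun x : S => g x)

lemma esymm_bound_aux (g : ℕ → ℝ) (hg : ∀ k, 0 ≤ g k) (u : Finset ℕ) (n : ℕ) :
    ∑ S ∈ u.powersetCard n, ∏ k ∈ S, g k ≤ (∑ k ∈ u, g k) ^ n := by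
  classical
  have h1 : (∑ k ∈ u, g k) ^ n
      = ∑ p ∈ Fintype.piFinset (fun _ : Fin n => u), ∏ i, g (p i) := by
    rw [← Finset.prod_univ_sum]
    simp
  rw [h1, ← Finset.sum_attach (u.powersetCard n) (fun S => ∏ k ∈ S, g k)]
  set e : {S // S ∈ u.powersetCard n} → (Fin n → ℕ) :=
    fun S i => (S.1.orderIsoOfFin (Finset.mem_powersetCard.mp S.2).2 i : ℕ) with he
  have hrec : ∀ S : {S // S ∈ u.powersetCard n}, S.1 = Finset.image (e S) Finset.univ := by
    intro S; ext k
    simp only [Finset.mem_image, Finset.mem_univ, true_and, he]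
    constructor
    · intro hk
      exact ⟨(S.1.orderIsoOfFin (Finset.mem_powersetCard.mp S.2).2).symm ⟨k, hk⟩, by simp⟩
    · rintro ⟨i, rfl⟩
      exact (S.1.orderIsoOfFin (Finset.mem_powersetCard.mp S.2).2 i).2
  have hinj : ∀ x ∈ (u.powersetCard n).attach, ∀ y ∈ (u.powersetCard n).attach,
      e x = e y → x = y := by
    intro x _ y _ hxy
    apply Subtype.ext
    rw [hrec x, hrec y, hxy]
  calc ∑ S ∈ (u.powersetCard n).attach, ∏ k ∈ S.1, g k
      = ∑ p ∈ (u.powersetCard n).attach.image e, ∏ i, g (p i) := by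
        rw [Finset.sum_image hinj]
        exact Finset.sum_congr rfl fun S _ =>
          (prod_orderIsoOfFin_aux g (Finset.mem_powersetCard.mp S.2).2).symm
    _ ≤ ∑ p ∈ Fintype.piFinset (fun _ : Fin n => u), ∏ i, g (p i) := by
        apply Finset.sum_le_sum_of_subset_of_nonneg
        · intro p hp
          simp only [Finset.mem_image] at hp
          obtain ⟨S, hS, rfl⟩ := hp
          rw [Fintype.mem_piFinset]
          intro i
          exact (Finset.mem_powersetCard.mp S.2).1
            (S.1.orderIsoOfFin (Finset.mem_powersetCard.mp S.2).2 i).2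
        · intro p _ _
          exact Finset.prod_nonneg fun i _ => hg _

/-- Let `z : ℕ → ℂ` be nonzero with `∑ 1/|z k| < ∞`, and let
`a N n = (-1)^n ∑_{S ⊆ {0,…,N-1}, |S| = n} ∏_{k ∈ S} 1/z k` be the coefficient
of `X^n` in `∏_{k < N} (1 - X / z k)`.  Then for each fixed `n` the family
`S ↦ ∏_{k ∈ S} 1/z k` over finite `S ⊆ ℕ` with `|S| = n` is summable, and
`a N n` converges as `N → ∞` to `(-1)^n` times its sum. -/
theorem partial_product_coeff_tendsto (z : ℕ → ℂ) (hz : ∀ k, z k ≠ 0)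
    (hsum : Summable fun k => 1 / ‖z k‖) (n : ℕ) :
    Summable (fun S : {S : Finset ℕ // S.card = n} => ∏ k ∈ (S : Finset ℕ), (z k)⁻¹) ∧
    Tendsto
      (fun N : ℕ =>
        (-1 : ℂ) ^ n * ∑ S ∈ (Finset.range N).powersetCard n, ∏ k ∈ S, (z k)⁻¹)
      atTop
      (nhds ((-1 : ℂ) ^ n *
        ∑' S : {S : Finset ℕ // S.card = n}, ∏ k ∈ (S : Finset ℕ), (z k)⁻¹)) := by
  classical
  set g : ℕ → ℝ := fun k => ‖z k‖⁻¹ with hgdef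
  have hg0 : ∀ k, 0 ≤ g k := fun k => inv_nonneg.mpr (norm_nonneg _)
  have hgsum : Summable g := by simpa [hgdef, one_div] using hsum
  -- real summability over card-n subsets
  have hreal : Summable (fun S : {S : Finset ℕ // S.card = n} => ∏ k ∈ (S : Finset ℕ), g k) := by
    apply summable_of_sum_le (c := (∑' k, g k) ^ n)
    · intro S
      exact Finset.prod_nonneg fun k _ => hg0 k
    · intro T
      set u : Finset ℕ := T.sup (fun S => S.1) with hu
      calc ∑ S ∈ T, ∏ k ∈ (S : Finset ℕ), g k
          = ∑ A ∈ T.image Subtype.val, ∏ k ∈ A, g k := by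
            rw [Finset.sum_image (fun x _ y _ h => Subtype.ext h)]
        _ ≤ ∑ A ∈ u.powersetCard n, ∏ k ∈ A, g k := by
            apply Finset.sum_le_sum_of_subset_of_nonneg
            · intro A hA
              simp only [Finset.mem_image] at hA
              obtain ⟨S, hS, rfl⟩ := hA
              exact Finset.mem_powersetCard.mpr ⟨Finset.le_sup (f := fun S => S.1) hS, S.2⟩
            · intro A _ _
              exact Finset.prod_nonneg fun k _ => hg0 k
        _ ≤ (∑ k ∈ u, g k) ^ n := esymm_bound_aux g hg0 u n
        _ ≤ (∑' k, g k) ^ n := by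
            apply pow_le_pow_left₀ (Finset.sum_nonneg fun k _ => hg0 k)
            exact Summable.sum_le_tsum u (fun k _ => hg0 k) hgsum
  have hsummable : Summable
      (fun S : {S : Finset ℕ // S.card = n} => ∏ k ∈ (S : Finset ℕ), (z k)⁻¹) := by
    apply Summable.of_norm
    convert hreal using 2 with S
    rw [norm_prod]
    exact Finset.prod_congr rfl fun k _ => by
      rw [norm_inv, hgdef]
  refine ⟨hsummable, ?_⟩
  -- the finsets of subsets of range N tend to atTop
  set F : ℕ → Finset {S : Finset ℕ // S.card = n} :=
    fun N => Finset.subtype _ ((Finset.range N).powersetCard n) with hF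
  have hFmono : Tendsto F atTop atTop := by
    apply tendsto_atTop_finset_of_monotone
    · intro N M hNM
      exact Finset.subtype_mono (Finset.powersetCard_mono (Finset.range_subset_range.mpr hNM))
    · intro x
      refine ⟨x.1.sup id + 1, ?_⟩
      rw [hF, Finset.mem_subtype, Finset.mem_powersetCard]
      exact ⟨fun k hk => Finset.mem_range.mpr (Nat.lt_succ_of_le (Finset.le_sup (f := id) hk)),
        x.2⟩
  have key : ∀ N, ∑ x ∈ F N, (∏ k ∈ (x : Finset ℕ), (z k)⁻¹)
      = ∑ S ∈ (Finset.range N).powersetCard n, ∏ k ∈ S, (z k)⁻¹ := by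
    intro N
    rw [hF]
    beta_reduce
    exact Finset.sum_subtype_of_mem (fun S => ∏ k ∈ S, (z k)⁻¹) fun S hS => (Finset.mem_powersetCard.mp hS).2
  have hT := (hsummable.hasSum.comp hFmono).const_mul ((-1 : ℂ) ^ n)
  refine hT.congr fun N => ?_
  simp only [Function.comp, key N]
end
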